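/- Let N ≥ 1, λ ∈ ℝ, and let a_j, c_j ∈ ℂ (1 ≤ j ≤ N) satisfy the strip condition −3δ/2 < Im a_j < −δ/2 for all j and the constraints c_j·(λ − i·Σ_{k=1}^N conj(c_k)·α(a_j − conj(a_k) + iδ)) + 1 = 0 for all j. Define u(x) := λ + i·Σ_{j=1}^N c_j·α(x − a_j − iδ/2), v(x) := −λ − i·Σ_{j=1}^N c_j·α(x − a_j + iδ/2), and B := λ² + (π/(2δ))²·|Σ_{j=1}^N c_j|². Then for every x ∈ ℝ: |u(x)|² = B − i·Σ_{j=1}^N (α(x − a_j − iδ/2) − α(x − conj(a_j) + iδ/2)) and |v(x)|² = B − i·Σ_{j=1}^N (α(x − a_j + iδ/2) − α(x − conj(a_j) − iδ/2)). In particular, the right-hand sides are real. -/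

import Mathlib

open MeasureTheory Filter Finset ComplexConjugate

noncomputable section

/-- `α(z) = (π/(2δ)) coth(πz/(2δ))`. -/
def cmAlpha (δ : ℝ) (z : ℂ) : ℂ :=
  ((Real.pi / (2 * δ) : ℝ) : ℂ) *
    (Complex.cosh ((Real.pi : ℂ) * z / (2 * (δ : ℂ))) /
     Complex.sinh ((Real.pi : ℂ) * z / (2 * (δ : ℂ))))

/-- `V(z) = (π/(2δ))² / sinh(πz/(2δ))²`. -/
def cmV (δ : ℝ) (z : ℂ) : ℂ :=
  ((Real.pi / (2 * δ) : ℝ) : ℂ) ^ 2 / Complex.sinh ((Real.pi : ℂ) * z / (2 * (δ : ℂ))) ^ 2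

/-- `V'(z) = -2 (π/(2δ))³ cosh(πz/(2δ)) / sinh(πz/(2δ))³`. -/
def cmV' (δ : ℝ) (z : ℂ) : ℂ :=
  -2 * ((Real.pi / (2 * δ) : ℝ) : ℂ) ^ 3 *
    Complex.cosh ((Real.pi : ℂ) * z / (2 * (δ : ℂ))) /
    Complex.sinh ((Real.pi : ℂ) * z / (2 * (δ : ℂ))) ^ 3

/-- real hyperbolic cotangent -/
def rcoth (y : ℝ) : ℝ := Real.cosh y / Real.sinh y

/-- `(T g)(x) = L`: the principal-value limit defining the operator `T` exists and equals `L`. -/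
def HasPV (δ : ℝ) (g : ℝ → ℂ) (x : ℝ) (L : ℂ) : Prop :=
  Tendsto (fun ε : ℝ =>
      (1 / (2 * (δ : ℂ))) *
        ∫ x' in {x' : ℝ | ε ≤ |x' - x|},
          ((rcoth (Real.pi * (x' - x) / (2 * δ)) : ℝ) : ℂ) * g x')
    (nhdsWithin 0 (Set.Ioi 0)) (nhds L)

/-- kernel of the operator `T̃`. -/
def TtKer (δ : ℝ) (x x' : ℝ) : ℝ := Real.tanh (Real.pi * (x' - x) / (2 * δ))

/-- the operator `T̃`. -/
def Ttilde (δ : ℝ) (g : ℝ → ℂ) (x : ℝ) : ℂ :=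
  (1 / (2 * (δ : ℂ))) * ∫ x', ((TtKer δ x x' : ℝ) : ℂ) * g x'

/-- `x' ↦ ∂_{x'} |w(x',t)|²`. -/
def sqAbsDeriv (w : ℝ → ℝ → ℂ) (t x' : ℝ) : ℝ :=
  deriv (fun y => norm (w y t) ^ 2) x'

/-- The intermediate mixed Manakov (IMM) system holds for the pair `(u,v)` at the point `(x,t)`,
including existence of the relevant principal-value limits and integrals. -/
def IMMat (δ : ℝ) (u v : ℝ → ℝ → ℂ) (x t : ℝ) : Prop :=
  ∃ Tu Tv : ℂ,
    HasPV δ (fun x' => ((sqAbsDeriv u t x' : ℝ) : ℂ)) x Tu ∧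
    HasPV δ (fun x' => ((sqAbsDeriv v t x' : ℝ) : ℂ)) x Tv ∧
    Integrable (fun x' => ((TtKer δ x x' : ℝ) : ℂ) * ((sqAbsDeriv u t x' : ℝ) : ℂ)) ∧
    Integrable (fun x' => ((TtKer δ x x' : ℝ) : ℂ) * ((sqAbsDeriv v t x' : ℝ) : ℂ)) ∧
    Complex.I * deriv (fun s => u x s) t =
      deriv (fun y => deriv (fun z => u z t) y) x
        + u x t * (Complex.I * ((sqAbsDeriv u t x : ℝ) : ℂ) + Tu)
        - u x t * Ttilde δ (fun x' => ((sqAbsDeriv v t x' : ℝ) : ℂ)) x ∧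
    Complex.I * deriv (fun s => v x s) t =
      deriv (fun y => deriv (fun z => v z t) y) x
        + v x t * (Complex.I * ((sqAbsDeriv v t x : ℝ) : ℂ) - Tv)
        + v x t * Ttilde δ (fun x' => ((sqAbsDeriv u t x' : ℝ) : ℂ)) x

/-- the time interval `[0, τ)` for `τ ∈ (0, ∞]`. -/
def timeDom (τ : ENNReal) : Set ℝ := {t : ℝ | 0 ≤ t ∧ ENNReal.ofReal t < τ}


section AuxCM

open Complex

private lemma cm_sinh_ne (δ : ℝ) (hδ : 0 < δ) (z : ℂ) (n : ℤ)
    (h1 : 2 * δ * n < z.im) (h2 : z.im < 2 * δ * (n + 1)) :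
    Complex.sinh ((Real.pi : ℂ) * z / (2 * (δ : ℂ))) ≠ 0 := by
  intro h0
  have hsin : Complex.sin (((Real.pi : ℂ) * z / (2 * (δ : ℂ))) * Complex.I) = 0 := by
    rw [Complex.sin_mul_I, h0, zero_mul]
  rw [Complex.sin_eq_zero_iff] at hsin
  obtain ⟨k, hk⟩ := hsin
  have hIm : (((Real.pi : ℂ) * z / (2 * (δ : ℂ))) * Complex.I).im = (((k : ℂ) * Real.pi)).im := by
    rw [hk]
  have hrw : (Real.pi : ℂ) * z / (2 * (δ : ℂ)) = ((Real.pi / (2 * δ) : ℝ) : ℂ) * z := by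
    push_cast
    field_simp
  have him1 : (((Real.pi : ℂ) * z / (2 * (δ : ℂ))) * Complex.I).im
      = Real.pi / (2 * δ) * z.re := by
    rw [hrw]
    simp only [Complex.mul_im, Complex.mul_re, Complex.I_re, Complex.I_im,
      Complex.ofReal_re, Complex.ofReal_im]
    ring
  have hre : (((Real.pi : ℂ) * z / (2 * (δ : ℂ))) * Complex.I).re
      = -(Real.pi / (2 * δ) * z.im) := by
    rw [hrw]
    simp only [Complex.mul_im, Complex.mul_re, Complex.I_re, Complex.I_im,
      Complex.ofReal_re, Complex.ofReal_im]
    ring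
  have hRe : (((Real.pi : ℂ) * z / (2 * (δ : ℂ))) * Complex.I).re = (((k : ℂ) * Real.pi)).re := by
    rw [hk]
  have hre2 : (((k : ℂ) * Real.pi)).re = (k : ℝ) * Real.pi := by
    simp [Complex.mul_re]
  rw [hre, hre2] at hRe
  -- so z.im = -2δk
  have hπ : 0 < Real.pi := Real.pi_pos
  have hz : z.im = 2 * δ * (-k : ℤ) := by
    push_cast
    have hne : Real.pi / (2 * δ) ≠ 0 := by positivity
    field_simp at hRe
    nlinarith [hRe]
  rw [hz] at h1 h2
  have hk1 : (n : ℝ) < (-k : ℤ) := by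
    have := (mul_lt_mul_iff_right₀ (by positivity : (0:ℝ) < 2 * δ)).mp h1
    exact_mod_cast this
  have hk2 : ((-k : ℤ) : ℝ) < (n : ℝ) + 1 := by
    have := (mul_lt_mul_iff_right₀ (by positivity : (0:ℝ) < 2 * δ)).mp h2
    push_cast at this ⊢
    linarith
  have hk1' : n < -k := by exact_mod_cast hk1
  have hk2' : -k < n + 1 := by exact_mod_cast hk2
  omega

private lemma cmAlpha_neg (δ : ℝ) (z : ℂ) : cmAlpha δ (-z) = -cmAlpha δ z := by
  unfold cmAlpha
  have h : (Real.pi : ℂ) * (-z) / (2 * (δ : ℂ)) = -((Real.pi : ℂ) * z / (2 * (δ : ℂ))) := by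
    ring
  rw [h, Complex.sinh_neg, Complex.cosh_neg, div_neg, mul_neg]

private lemma cmAlpha_conj (δ : ℝ) (z : ℂ) :
    (starRingEnd ℂ) (cmAlpha δ z) = cmAlpha δ ((starRingEnd ℂ) z) := by
  unfold cmAlpha
  have h : (Real.pi : ℂ) * (starRingEnd ℂ) z / (2 * (δ : ℂ))
      = (starRingEnd ℂ) ((Real.pi : ℂ) * z / (2 * (δ : ℂ))) := by
    rw [map_div₀, map_mul, map_mul, Complex.conj_ofReal, Complex.conj_ofReal, map_ofNat]
  rw [h, Complex.sinh_conj, Complex.cosh_conj, map_mul, map_div₀, Complex.conj_ofReal]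

private lemma cmAlpha_period (δ : ℝ) (hδ : δ ≠ 0) (z : ℂ) :
    cmAlpha δ (z + 2 * Complex.I * (δ : ℂ)) = cmAlpha δ z := by
  unfold cmAlpha
  have hw : (Real.pi : ℂ) * (z + 2 * Complex.I * (δ : ℂ)) / (2 * (δ : ℂ))
      = (Real.pi : ℂ) * z / (2 * (δ : ℂ)) + (Real.pi : ℂ) * Complex.I := by
    have hδ' : (δ : ℂ) ≠ 0 := by exact_mod_cast hδ
    field_simp
  have hs : Complex.sinh ((Real.pi : ℂ) * Complex.I) = 0 := by
    rw [Complex.sinh_mul_I, ← Complex.ofReal_sin, Real.sin_pi, Complex.ofReal_zero, zero_mul]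
  have hc : Complex.cosh ((Real.pi : ℂ) * Complex.I) = -1 := by
    rw [Complex.cosh_mul_I, ← Complex.ofReal_cos, Real.cos_pi]
    norm_num
  rw [hw, Complex.sinh_add, Complex.cosh_add, hs, hc]
  rw [show ∀ a b : ℂ, (a * (-1) + b * 0) / (b * (-1) + a * 0) = a / b from fun a b => by
    rw [mul_zero, mul_zero, add_zero, add_zero, mul_neg_one, mul_neg_one, neg_div_neg_eq]]

private lemma coth_identity (A B : ℂ) (hA : Complex.sinh A ≠ 0) (hB : Complex.sinh B ≠ 0)
    (hAB : Complex.sinh (A - B) ≠ 0) :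
    (Complex.cosh A / Complex.sinh A) * (Complex.cosh B / Complex.sinh B)
      = 1 - (Complex.cosh A / Complex.sinh A - Complex.cosh B / Complex.sinh B) *
          (Complex.cosh (A - B) / Complex.sinh (A - B)) := by
  rw [Complex.sinh_sub, Complex.cosh_sub] at *
  field_simp
  ring

private lemma cmAlpha_mul (δ : ℝ) (z1 z2 : ℂ)
    (h1 : Complex.sinh ((Real.pi : ℂ) * z1 / (2 * (δ : ℂ))) ≠ 0)
    (h2 : Complex.sinh ((Real.pi : ℂ) * z2 / (2 * (δ : ℂ))) ≠ 0)
    (h12 : Complex.sinh ((Real.pi : ℂ) * (z1 - z2) / (2 * (δ : ℂ))) ≠ 0) :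
    cmAlpha δ z1 * cmAlpha δ z2
      = ((Real.pi / (2 * δ) : ℝ) : ℂ) ^ 2
        + (cmAlpha δ z1 - cmAlpha δ z2) * (-cmAlpha δ (z1 - z2)) := by
  have hsub : (Real.pi : ℂ) * (z1 - z2) / (2 * (δ : ℂ))
      = (Real.pi : ℂ) * z1 / (2 * (δ : ℂ)) - (Real.pi : ℂ) * z2 / (2 * (δ : ℂ)) := by
    ring
  rw [hsub] at h12
  have key := coth_identity _ _ h1 h2 h12
  unfold cmAlpha
  rw [hsub]
  set P : ℂ := ((Real.pi / (2 * δ) : ℝ) : ℂ)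
  set cA := Complex.cosh ((Real.pi : ℂ) * z1 / (2 * (δ : ℂ))) / Complex.sinh ((Real.pi : ℂ) * z1 / (2 * (δ : ℂ)))
  set cB := Complex.cosh ((Real.pi : ℂ) * z2 / (2 * (δ : ℂ))) / Complex.sinh ((Real.pi : ℂ) * z2 / (2 * (δ : ℂ)))
  set cC := Complex.cosh ((Real.pi : ℂ) * z1 / (2 * (δ : ℂ)) - (Real.pi : ℂ) * z2 / (2 * (δ : ℂ))) / Complex.sinh ((Real.pi : ℂ) * z1 / (2 * (δ : ℂ)) - (Real.pi : ℂ) * z2 / (2 * (δ : ℂ)))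
  linear_combination (P ^ 2) * key

private lemma sum_key {N : ℕ} (lam : ℝ) (c A B : Fin N → ℂ) (γ : Fin N → Fin N → ℂ) (P : ℂ)
    (hAB : ∀ j k, A j * B k = P ^ 2 + (A j - B k) * γ j k)
    (h1 : ∀ j, c j * ((lam : ℂ) - Complex.I * ∑ k, conj (c k) * γ j k) + 1 = 0)
    (h2 : ∀ k, conj (c k) * ((lam : ℂ) - Complex.I * ∑ j, c j * γ j k) + 1 = 0) :
    ((lam : ℂ) + Complex.I * ∑ j, c j * A j) * ((lam : ℂ) - Complex.I * ∑ k, conj (c k) * B k)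
      = (lam : ℂ) ^ 2 + P ^ 2 * ((∑ j, c j) * ∑ k, conj (c k))
        - Complex.I * (∑ j, A j - ∑ j, B j) := by
  have e1 : ∀ j, c j * ∑ k, conj (c k) * γ j k = -Complex.I * ((lam : ℂ) * c j + 1) := by
    intro j
    linear_combination Complex.I * h1 j + (c j * ∑ k, conj (c k) * γ j k) * Complex.I_sq
  have e2 : ∀ k, conj (c k) * ∑ j, c j * γ j k = -Complex.I * ((lam : ℂ) * conj (c k) + 1) := by
    intro k
    linear_combination Complex.I * h2 k + (conj (c k) * ∑ j, c j * γ j k) * Complex.I_sq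
  have key : (∑ j, c j * A j) * (∑ k, conj (c k) * B k)
      = P ^ 2 * ((∑ j, c j) * ∑ k, conj (c k))
        + (-Complex.I * (lam : ℂ) * (∑ j, c j * A j) - Complex.I * ∑ j, A j)
        - (-Complex.I * (lam : ℂ) * (∑ k, conj (c k) * B k) - Complex.I * ∑ k, B k) := by
    calc (∑ j, c j * A j) * (∑ k, conj (c k) * B k)
        = ∑ j, ∑ k, (c j * A j) * (conj (c k) * B k) := by
          rw [Finset.sum_mul_sum]
      _ = ∑ j, ∑ k, (P ^ 2 * (c j * conj (c k))
            + A j * (c j * (conj (c k) * γ j k))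
            - B k * (conj (c k) * (c j * γ j k))) := by
          refine Finset.sum_congr rfl fun j _ => Finset.sum_congr rfl fun k _ => ?_
          linear_combination (c j * conj (c k)) * hAB j k
      _ = (∑ j, ∑ k, P ^ 2 * (c j * conj (c k)))
            + (∑ j, ∑ k, A j * (c j * (conj (c k) * γ j k)))
            - ∑ j, ∑ k, B k * (conj (c k) * (c j * γ j k)) := by
          simp [Finset.sum_add_distrib, Finset.sum_sub_distrib]
      _ = P ^ 2 * ((∑ j, c j) * ∑ k, conj (c k))
            + (∑ j, A j * (c j * ∑ k, conj (c k) * γ j k))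
            - ∑ k, B k * (conj (c k) * ∑ j, c j * γ j k) := by
          congr 1
          · congr 1
            · rw [Finset.sum_mul_sum, Finset.mul_sum]
              exact Finset.sum_congr rfl fun j _ => by rw [Finset.mul_sum]
            · exact Finset.sum_congr rfl fun j _ => by rw [Finset.mul_sum, Finset.mul_sum]
          · rw [Finset.sum_comm]
            exact Finset.sum_congr rfl fun k _ => by rw [Finset.mul_sum, Finset.mul_sum]
      _ = P ^ 2 * ((∑ j, c j) * ∑ k, conj (c k))
            + (∑ j, A j * (-Complex.I * ((lam : ℂ) * c j + 1)))
            - ∑ k, B k * (-Complex.I * ((lam : ℂ) * conj (c k) + 1)) := by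
          congr 1
          · congr 1
            exact Finset.sum_congr rfl fun j _ => by rw [e1 j]
          · exact Finset.sum_congr rfl fun k _ => by rw [e2 k]
      _ = P ^ 2 * ((∑ j, c j) * ∑ k, conj (c k))
            + (-Complex.I * (lam : ℂ) * (∑ j, c j * A j) - Complex.I * ∑ j, A j)
            - (-Complex.I * (lam : ℂ) * (∑ k, conj (c k) * B k) - Complex.I * ∑ k, B k) := by
          congr 1
          · congr 1
            rw [Finset.mul_sum, Finset.mul_sum, ← Finset.sum_sub_distrib]
            exact Finset.sum_congr rfl fun j _ => by ring
          · rw [Finset.mul_sum, Finset.mul_sum, ← Finset.sum_sub_distrib]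
            exact Finset.sum_congr rfl fun k _ => by ring
  linear_combination key - ((∑ j, c j * A j) * (∑ k, conj (c k) * B k) : ℂ) * Complex.I_sq

end AuxCM

/-- the squared amplitudes of the pole ansatz. -/
theorem imm_amplitude_formula
    (δ : ℝ) (hδ : 0 < δ) (N : ℕ) (hN : 1 ≤ N)
    (lam : ℝ) (a c : Fin N → ℂ)
    (hstrip : ∀ j, -(3 * δ) / 2 < (a j).im ∧ (a j).im < -δ / 2)
    (hC : ∀ j, c j * ((lam : ℂ) - Complex.I * ∑ k, conj (c k) *
      cmAlpha δ (a j - conj (a k) + Complex.I * (δ : ℂ))) + 1 = 0) :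
    ∀ x : ℝ,
      ((norm ((lam : ℂ) + Complex.I *
          ∑ j, c j * cmAlpha δ ((x : ℂ) - a j - Complex.I * (δ : ℂ) / 2)) ^ 2 : ℝ) : ℂ) =
        ((lam ^ 2 + (Real.pi / (2 * δ)) ^ 2 * norm (∑ j, c j) ^ 2 : ℝ) : ℂ)
          - Complex.I * ∑ j, (cmAlpha δ ((x : ℂ) - a j - Complex.I * (δ : ℂ) / 2)
              - cmAlpha δ ((x : ℂ) - conj (a j) + Complex.I * (δ : ℂ) / 2)) ∧
      ((norm (-(lam : ℂ) - Complex.I *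
          ∑ j, c j * cmAlpha δ ((x : ℂ) - a j + Complex.I * (δ : ℂ) / 2)) ^ 2 : ℝ) : ℂ) =
        ((lam ^ 2 + (Real.pi / (2 * δ)) ^ 2 * norm (∑ j, c j) ^ 2 : ℝ) : ℂ)
          - Complex.I * ∑ j, (cmAlpha δ ((x : ℂ) - a j + Complex.I * (δ : ℂ) / 2)
              - cmAlpha δ ((x : ℂ) - conj (a j) - Complex.I * (δ : ℂ) / 2)) := by
  intro x
  have hδ' : δ ≠ 0 := ne_of_gt hδ
  set P : ℂ := ((Real.pi / (2 * δ) : ℝ) : ℂ) with hP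
  -- conjugate constraint
  have hconv : ∀ j k : Fin N,
      conj (cmAlpha δ (a k - conj (a j) + Complex.I * (δ:ℂ)))
        = - cmAlpha δ (a j - conj (a k) + Complex.I * (δ:ℂ)) := by
    intro j k
    rw [cmAlpha_conj]
    have h : conj (a k - conj (a j) + Complex.I * (δ:ℂ))
        = -(a j - conj (a k) + Complex.I * (δ:ℂ)) := by
      rw [map_add, map_sub, Complex.conj_conj, map_mul, Complex.conj_I, Complex.conj_ofReal]
      ring
    rw [h, cmAlpha_neg]
  have h2 : ∀ k, conj (c k) * ((lam : ℂ) - Complex.I *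
      ∑ j, c j * cmAlpha δ (a j - conj (a k) + Complex.I * (δ:ℂ))) + 1 = 0 := by
    intro k
    have h := congrArg (starRingEnd ℂ) (hC k)
    rw [map_add, map_one, map_zero, map_mul, map_sub, map_mul, Complex.conj_I,
      Complex.conj_ofReal, map_sum] at h
    have hs : ∑ j, conj (conj (c j) * cmAlpha δ (a k - conj (a j) + Complex.I * (δ:ℂ)))
        = ∑ j, -(c j * cmAlpha δ (a j - conj (a k) + Complex.I * (δ:ℂ))) := by
      refine Finset.sum_congr rfl fun j _ => ?_
      rw [map_mul, Complex.conj_conj, hconv j k]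
      ring
    rw [hs, Finset.sum_neg_distrib] at h
    linear_combination h
  -- nonvanishing facts
  have nvA : ∀ j : Fin N,
      Complex.sinh ((Real.pi : ℂ) * ((x:ℂ) - a j - Complex.I * (δ:ℂ) / 2) / (2 * (δ:ℂ))) ≠ 0 := by
    intro j
    have hj := hstrip j
    refine cm_sinh_ne δ hδ _ 0 ?_ ?_ <;> · simp; push_cast; linarith [hj.1, hj.2]
  have nvB : ∀ k : Fin N,
      Complex.sinh ((Real.pi : ℂ) * ((x:ℂ) - conj (a k) + Complex.I * (δ:ℂ) / 2) / (2 * (δ:ℂ))) ≠ 0 := by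
    intro k
    have hk := hstrip k
    refine cm_sinh_ne δ hδ _ (-1) ?_ ?_ <;> · simp; push_cast; linarith [hk.1, hk.2]
  have nvA' : ∀ j : Fin N,
      Complex.sinh ((Real.pi : ℂ) * ((x:ℂ) - a j + Complex.I * (δ:ℂ) / 2) / (2 * (δ:ℂ))) ≠ 0 := by
    intro j
    have hj := hstrip j
    refine cm_sinh_ne δ hδ _ 0 ?_ ?_ <;> · simp; push_cast; linarith [hj.1, hj.2]
  have nvB' : ∀ k : Fin N,
      Complex.sinh ((Real.pi : ℂ) * ((x:ℂ) - conj (a k) - Complex.I * (δ:ℂ) / 2) / (2 * (δ:ℂ))) ≠ 0 := by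
    intro k
    have hk := hstrip k
    refine cm_sinh_ne δ hδ _ (-1) ?_ ?_ <;> · simp; push_cast; linarith [hk.1, hk.2]
  -- product identities
  have hAB1 : ∀ j k : Fin N,
      cmAlpha δ ((x:ℂ) - a j - Complex.I * (δ:ℂ) / 2)
        * cmAlpha δ ((x:ℂ) - conj (a k) + Complex.I * (δ:ℂ) / 2)
      = P ^ 2 + (cmAlpha δ ((x:ℂ) - a j - Complex.I * (δ:ℂ) / 2)
          - cmAlpha δ ((x:ℂ) - conj (a k) + Complex.I * (δ:ℂ) / 2))
        * cmAlpha δ (a j - conj (a k) + Complex.I * (δ:ℂ)) := by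
    intro j k
    have hj := hstrip j; have hk := hstrip k
    have nv3 : Complex.sinh ((Real.pi : ℂ) * (((x:ℂ) - a j - Complex.I * (δ:ℂ) / 2)
        - ((x:ℂ) - conj (a k) + Complex.I * (δ:ℂ) / 2)) / (2 * (δ:ℂ))) ≠ 0 := by
      refine cm_sinh_ne δ hδ _ 0 ?_ ?_ <;>
        · simp; push_cast; nlinarith [hj.1, hj.2, hk.1, hk.2]
    have h := cmAlpha_mul δ _ _ (nvA j) (nvB k) nv3
    rw [h]
    have hd : ((x:ℂ) - a j - Complex.I * (δ:ℂ) / 2) - ((x:ℂ) - conj (a k) + Complex.I * (δ:ℂ) / 2)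
        = -(a j - conj (a k) + Complex.I * (δ:ℂ)) := by ring
    rw [hd, cmAlpha_neg, neg_neg]
  have hAB2 : ∀ j k : Fin N,
      cmAlpha δ ((x:ℂ) - a j + Complex.I * (δ:ℂ) / 2)
        * cmAlpha δ ((x:ℂ) - conj (a k) - Complex.I * (δ:ℂ) / 2)
      = P ^ 2 + (cmAlpha δ ((x:ℂ) - a j + Complex.I * (δ:ℂ) / 2)
          - cmAlpha δ ((x:ℂ) - conj (a k) - Complex.I * (δ:ℂ) / 2))
        * cmAlpha δ (a j - conj (a k) + Complex.I * (δ:ℂ)) := by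
    intro j k
    have hj := hstrip j; have hk := hstrip k
    have nv3 : Complex.sinh ((Real.pi : ℂ) * (((x:ℂ) - a j + Complex.I * (δ:ℂ) / 2)
        - ((x:ℂ) - conj (a k) - Complex.I * (δ:ℂ) / 2)) / (2 * (δ:ℂ))) ≠ 0 := by
      refine cm_sinh_ne δ hδ _ 1 ?_ ?_ <;>
        · simp; push_cast; nlinarith [hj.1, hj.2, hk.1, hk.2]
    have h := cmAlpha_mul δ _ _ (nvA' j) (nvB' k) nv3
    rw [h]
    have hd : ((x:ℂ) - a j + Complex.I * (δ:ℂ) / 2) - ((x:ℂ) - conj (a k) - Complex.I * (δ:ℂ) / 2)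
        = (-(a j - conj (a k) + Complex.I * (δ:ℂ))) + 2 * Complex.I * (δ:ℂ) := by ring
    rw [hd, cmAlpha_period δ hδ', cmAlpha_neg, neg_neg]
  -- abs squared as product with conjugate
  have habs : ∀ z : ℂ, ((norm z ^ 2 : ℝ) : ℂ) = z * conj z := by
    intro z
    rw [Complex.sq_norm, Complex.mul_conj]
  -- conjugates of the two amplitudes
  have hconj_arg1 : ∀ j : Fin N,
      conj (c j * cmAlpha δ ((x:ℂ) - a j - Complex.I * (δ:ℂ) / 2))
        = conj (c j) * cmAlpha δ ((x:ℂ) - conj (a j) + Complex.I * (δ:ℂ) / 2) := by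
    intro j
    rw [map_mul, cmAlpha_conj]
    congr 2
    rw [map_sub, map_sub, Complex.conj_ofReal, map_div₀, map_mul, Complex.conj_I,
      Complex.conj_ofReal, map_ofNat]
    ring
  have hconj_arg2 : ∀ j : Fin N,
      conj (c j * cmAlpha δ ((x:ℂ) - a j + Complex.I * (δ:ℂ) / 2))
        = conj (c j) * cmAlpha δ ((x:ℂ) - conj (a j) - Complex.I * (δ:ℂ) / 2) := by
    intro j
    rw [map_mul, cmAlpha_conj]
    congr 2
    rw [map_add, map_sub, Complex.conj_ofReal, map_div₀, map_mul, Complex.conj_I,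
      Complex.conj_ofReal, map_ofNat]
    ring
  -- the B-term
  have hB : ((lam ^ 2 + (Real.pi / (2 * δ)) ^ 2 * norm (∑ j, c j) ^ 2 : ℝ) : ℂ)
      = (lam : ℂ) ^ 2 + P ^ 2 * ((∑ j, c j) * ∑ j, conj (c j)) := by
    have h1 : ((norm (∑ j, c j) ^ 2 : ℝ) : ℂ) = (∑ j, c j) * ∑ j, conj (c j) := by
      rw [habs, map_sum]
    rw [Complex.ofReal_add, Complex.ofReal_mul, h1, Complex.ofReal_pow, Complex.ofReal_pow]
  constructor
  · have key := sum_key lam c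
      (fun j => cmAlpha δ ((x:ℂ) - a j - Complex.I * (δ:ℂ) / 2))
      (fun j => cmAlpha δ ((x:ℂ) - conj (a j) + Complex.I * (δ:ℂ) / 2))
      (fun j k => cmAlpha δ (a j - conj (a k) + Complex.I * (δ:ℂ))) P hAB1 hC h2
    rw [habs, hB, Finset.sum_sub_distrib]
    have hcu : conj ((lam : ℂ) + Complex.I *
        ∑ j, c j * cmAlpha δ ((x:ℂ) - a j - Complex.I * (δ:ℂ) / 2))
        = (lam : ℂ) - Complex.I *
          ∑ j, conj (c j) * cmAlpha δ ((x:ℂ) - conj (a j) + Complex.I * (δ:ℂ) / 2) := by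
      rw [map_add, map_mul, Complex.conj_I, Complex.conj_ofReal, map_sum]
      rw [Finset.sum_congr rfl fun j _ => hconj_arg1 j]
      ring
    rw [hcu]
    exact key
  · have key := sum_key lam c
      (fun j => cmAlpha δ ((x:ℂ) - a j + Complex.I * (δ:ℂ) / 2))
      (fun j => cmAlpha δ ((x:ℂ) - conj (a j) - Complex.I * (δ:ℂ) / 2))
      (fun j k => cmAlpha δ (a j - conj (a k) + Complex.I * (δ:ℂ))) P hAB2 hC h2
    rw [habs, hB, Finset.sum_sub_distrib]
    have hcv : conj (-(lam : ℂ) - Complex.I *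
        ∑ j, c j * cmAlpha δ ((x:ℂ) - a j + Complex.I * (δ:ℂ) / 2))
        = -(lam : ℂ) + Complex.I *
          ∑ j, conj (c j) * cmAlpha δ ((x:ℂ) - conj (a j) - Complex.I * (δ:ℂ) / 2) := by
      rw [map_sub, map_neg, map_mul, Complex.conj_I, Complex.conj_ofReal, map_sum]
      rw [Finset.sum_congr rfl fun j _ => hconj_arg2 j]
      ring
    rw [hcv]
    linear_combination key
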